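/- Let P^π be an N×N row-stochastic matrix (a Markov transition matrix), 0 ≤ γ < 1, D a diagonal matrix with strictly positive diagonal entries summing to 1 (a stationary distribution on states/actions), and Φ an N×K real matrix with full column rank K. Then every eigenvalue of the K×K matrix Φᵀ D (γP^π − I)Φ has strictly negative real part. -/

import Mathlib

open Matrix

-- quadratic form negativity
lemma quad_neg {N K : ℕ} (P : Matrix (Fin N) (Fin N) ℝ)
    (hPnn : ∀ i j, 0 ≤ P i j)
    (hrow : ∀ i, ∑ j, P i j = 1)
    (d : Fin N → ℝ) (hd : ∀ i, 0 < d i)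
    (hstat : ∀ j, ∑ i, d i * P i j = d j)
    (γ : ℝ) (hγ0 : 0 ≤ γ) (hγ1 : γ < 1)
    (Φ : Matrix (Fin N) (Fin K) ℝ) (hΦ : Function.Injective Φ.mulVec)
    (x : Fin K → ℝ) (hx : x ≠ 0) :
    x ⬝ᵥ (Φᵀ * Matrix.diagonal d * (γ • P - 1) * Φ).mulVec x < 0 := by
  set y : Fin N → ℝ := Φ.mulVec x with hy
  have hy0 : y ≠ 0 := by
    intro h
    apply hx
    apply hΦ
    rw [← hy, h, Matrix.mulVec_zero]
  set Py : Fin N → ℝ := P.mulVec y with hPy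
  have expand : x ⬝ᵥ (Φᵀ * Matrix.diagonal d * (γ • P - 1) * Φ).mulVec x
      = γ * (∑ i, d i * (y i * Py i)) - ∑ i, d i * y i ^ 2 := by
    rw [← Matrix.mulVec_mulVec, ← Matrix.mulVec_mulVec, ← Matrix.mulVec_mulVec,
      Matrix.dotProduct_mulVec, Matrix.vecMul_transpose, ← hy]
    have hz : (γ • P - 1).mulVec y = fun i => γ * Py i - y i := by
      funext i
      simp [Matrix.sub_mulVec, Matrix.smul_mulVec, Matrix.one_mulVec, hPy]
    rw [hz]
    simp only [dotProduct, Matrix.mulVec_diagonal]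
    rw [Finset.mul_sum, ← Finset.sum_sub_distrib]
    congr 1; funext i; ring
  rw [expand]
  set S1 : ℝ := ∑ i, d i * (y i * Py i) with hS1def
  set S2 : ℝ := ∑ i, d i * y i ^ 2 with hS2def
  set T : ℝ := ∑ i, d i * Py i ^ 2 with hTdef
  have hS2nn : 0 ≤ S2 := Finset.sum_nonneg fun i _ => mul_nonneg (hd i).le (sq_nonneg _)
  have hS2pos : 0 < S2 := by
    obtain ⟨i, hi⟩ := Function.ne_iff.mp hy0
    apply Finset.sum_pos' (fun j _ => mul_nonneg (hd j).le (sq_nonneg _))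
    exact ⟨i, Finset.mem_univ i, mul_pos (hd i) (sq_pos_of_ne_zero hi)⟩

  have hTS2 : T ≤ S2 := by
    have jensen : ∀ i, Py i ^ 2 ≤ ∑ j, P i j * y j ^ 2 := by
      intro i
      have := Finset.sum_sq_le_sum_mul_sum_of_sq_eq_mul Finset.univ
        (r := fun j => P i j * y j) (f := fun j => P i j) (g := fun j => P i j * y j ^ 2)
        (fun j _ => hPnn i j) (fun j _ => mul_nonneg (hPnn i j) (sq_nonneg _))
        (fun j _ => by ring)
      calc Py i ^ 2 = (∑ j, P i j * y j) ^ 2 := by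
              simp [hPy, Matrix.mulVec, dotProduct]
        _ ≤ (∑ j, P i j) * ∑ j, P i j * y j ^ 2 := this
        _ = ∑ j, P i j * y j ^ 2 := by rw [hrow i, one_mul]
    calc T ≤ ∑ i, d i * ∑ j, P i j * y j ^ 2 := by
            apply Finset.sum_le_sum
            intro i _
            exact mul_le_mul_of_nonneg_left (jensen i) (hd i).le
      _ = ∑ j, (∑ i, d i * P i j) * y j ^ 2 := by
            simp_rw [Finset.mul_sum, Finset.sum_mul]
            rw [Finset.sum_comm]
            congr 1; funext j; congr 1; funext i; ring
      _ = S2 := by simp_rw [hstat]; rfl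
  have hS1S2 : S1 ≤ S2 := by
    have cs : S1 ^ 2 ≤ S2 * T := by
      apply Finset.sum_sq_le_sum_mul_sum_of_sq_eq_mul Finset.univ
        (fun i _ => mul_nonneg (hd i).le (sq_nonneg _))
        (fun i _ => mul_nonneg (hd i).le (sq_nonneg _))
      intro i _
      ring
    nlinarith
  nlinarith [mul_le_mul_of_nonneg_left hS1S2 hγ0]

/-- if `P` is row stochastic with stationary distribution `d` having strictly
positive entries summing to 1, `0 ≤ γ < 1`, `D = diag(d)`, and `Φ` has full column rank,
then every (complex) eigenvalue of `Φᵀ D (γP − I) Φ` has strictly negative real part. -/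
theorem stmt12 {N K : ℕ} (P : Matrix (Fin N) (Fin N) ℝ)
    (hPnn : ∀ i j, 0 ≤ P i j)
    (hrow : ∀ i, ∑ j, P i j = 1)
    (d : Fin N → ℝ) (hd : ∀ i, 0 < d i) (hdsum : ∑ i, d i = 1)
    (hstat : ∀ j, ∑ i, d i * P i j = d j)
    (γ : ℝ) (hγ0 : 0 ≤ γ) (hγ1 : γ < 1)
    (Φ : Matrix (Fin N) (Fin K) ℝ) (hΦ : Function.Injective Φ.mulVec) :
    ∀ μ ∈ spectrum ℂ
        ((Φᵀ * Matrix.diagonal d * (γ • P - 1) * Φ).map (Complex.ofReal ·)),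
      μ.re < 0 := by
  intro μ hμ
  set A : Matrix (Fin K) (Fin K) ℝ := Φᵀ * Matrix.diagonal d * (γ • P - 1) * Φ with hA
  set M : Matrix (Fin K) (Fin K) ℂ := A.map (Complex.ofReal ·) with hM
  -- extract an eigenvector
  rw [spectrum.mem_iff] at hμ
  have hdet : (algebraMap ℂ (Matrix (Fin K) (Fin K) ℂ) μ - M).det = 0 := by
    by_contra h
    exact hμ ((Matrix.isUnit_iff_isUnit_det _).mpr (isUnit_iff_ne_zero.mpr h))
  obtain ⟨v, hv0, hv⟩ := (Matrix.exists_mulVec_eq_zero_iff).mpr hdet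
  have heig : M.mulVec v = μ • v := by
    rw [Matrix.sub_mulVec, Algebra.algebraMap_eq_smul_one, Matrix.smul_mulVec,
      Matrix.one_mulVec, sub_eq_zero] at hv
    exact hv.symm
  -- real and imaginary parts
  set a : Fin K → ℝ := fun i => (v i).re with ha
  set b : Fin K → ℝ := fun i => (v i).im with hb
  have hab : a ≠ 0 ∨ b ≠ 0 := by
    by_contra h
    push_neg at h
    apply hv0
    funext i
    have h1 := congrFun h.1 i
    have h2 := congrFun h.2 i
    exact Complex.ext h1 h2
  -- key identity on real parts
  have key : (∑ i, (starRingEnd ℂ) (v i) * M.mulVec v i).re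
      = a ⬝ᵥ A.mulVec a + b ⬝ᵥ A.mulVec b := by
    rw [Complex.re_sum]
    have : ∀ i, ((starRingEnd ℂ) (v i) * M.mulVec v i).re
        = ∑ j, A i j * (a i * a j + b i * b j) := by
      intro i
      rw [Matrix.mulVec, dotProduct, Finset.mul_sum, Complex.re_sum]
      congr 1
      funext j
      simp [hM, Matrix.map_apply, Complex.mul_re, Complex.mul_im, ha, hb]
      ring
    simp_rw [this]
    simp only [dotProduct, Matrix.mulVec, Finset.mul_sum, ← Finset.sum_add_distrib]
    exact Finset.sum_congr rfl fun i _ => Finset.sum_congr rfl fun j _ => by ring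
  have key2 : (∑ i, (starRingEnd ℂ) (v i) * M.mulVec v i).re
      = μ.re * ∑ i, Complex.normSq (v i) := by
    rw [heig]
    have : ∑ i, (starRingEnd ℂ) (v i) * (μ • v) i
        = μ * ∑ i, (Complex.normSq (v i) : ℂ) := by
      rw [Finset.mul_sum]
      congr 1
      funext i
      simp only [Pi.smul_apply, smul_eq_mul]
      calc (starRingEnd ℂ) (v i) * (μ * v i)
          = μ * (v i * (starRingEnd ℂ) (v i)) := by ring
        _ = μ * (Complex.normSq (v i) : ℂ) := by rw [Complex.mul_conj]
    rw [this]
    simp [Complex.ofReal_sum]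
  have hc : 0 < ∑ i, Complex.normSq (v i) := by
    obtain ⟨i, hi⟩ := Function.ne_iff.mp hv0
    apply Finset.sum_pos' (fun j _ => Complex.normSq_nonneg _)
    exact ⟨i, Finset.mem_univ i, Complex.normSq_pos.mpr hi⟩
  have hQ : a ⬝ᵥ A.mulVec a + b ⬝ᵥ A.mulVec b < 0 := by
    have hQa : ∀ x : Fin K → ℝ, x ⬝ᵥ A.mulVec x ≤ 0 := by
      intro x
      by_cases hx : x = 0
      · simp [hx]
      · exact (quad_neg P hPnn hrow d hd hstat γ hγ0 hγ1 Φ hΦ x hx).le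
    rcases hab with h | h
    · have := quad_neg P hPnn hrow d hd hstat γ hγ0 hγ1 Φ hΦ a h
      linarith [hQa b]
    · have := quad_neg P hPnn hrow d hd hstat γ hγ0 hγ1 Φ hΦ b h
      linarith [hQa a]
  nlinarith [key, key2, hc, hQ]
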